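/- Let f : [0,1] → ℝ be a continuous probability density on [0,1] (f ≥ 0, ∫₀¹ f = 1). For a positive integer n, partition [0,1] into 2n equal subintervals and let p_n be the total f-measure of the odd-indexed subintervals, i.e., p_n = ∑_{k=0}^{n-1} ∫_{2k/(2n)}^{(2k+1)/(2n)} f(x) dx. Then p_n → 1/2 as n → ∞. -/

import Mathlib

open MeasureTheory

lemma pair_bound (f : ℝ → ℝ) (hf_cont : ContinuousOn f (Set.Icc 0 1))
    {ε δ : ℝ} (h c : ℝ)
    (hδ' : ∀ x ∈ Set.Icc (0:ℝ) 1, ∀ y ∈ Set.Icc (0:ℝ) 1, dist x y < δ → dist (f x) (f y) < ε)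
    (hh : 0 < h) (hhδ : h < δ) (hc : 0 ≤ c) (hc2 : c + 2*h ≤ 1) :
    |(∫ x in c..(c+h), f x) - ∫ x in (c+h)..(c+2*h), f x| ≤ ε * h := by
  have huIcc : Set.uIcc c (c+h) = Set.Icc c (c+h) := Set.uIcc_of_le (by linarith)
  have hsub : Set.Icc c (c + h) ⊆ Set.Icc (0:ℝ) 1 :=
    Set.Icc_subset_Icc hc (by linarith)
  have hi1 : IntervalIntegrable f volume c (c+h) := by
    apply ContinuousOn.intervalIntegrable
    rw [huIcc]; exact hf_cont.mono hsub
  have hi2 : IntervalIntegrable (fun x => f (x+h)) volume c (c+h) := by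
    apply ContinuousOn.intervalIntegrable
    rw [huIcc]
    apply hf_cont.comp (Continuous.continuousOn (by continuity))
    intro x hx
    simp only [Set.mem_Icc] at hx ⊢
    constructor <;> linarith [hx.1, hx.2]
  have hshift : (∫ x in (c+h)..(c+2*h), f x) = ∫ x in c..(c+h), f (x+h) := by
    rw [intervalIntegral.integral_comp_add_right]
    congr 1
    ring
  rw [hshift, ← intervalIntegral.integral_sub hi1 hi2]
  have hb := intervalIntegral.norm_integral_le_of_norm_le_const
    (a := c) (b := c+h) (C := ε) (f := fun x => f x - f (x+h)) ?_
  · calc |∫ x in c..(c+h), (f x - f (x+h))| ≤ ε * |c + h - c| := hb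
      _ = ε * h := by rw [show c + h - c = h by ring, abs_of_pos hh]
  · intro x hx
    rw [Set.uIoc_of_le (by linarith)] at hx
    obtain ⟨hx1, hx2⟩ := hx
    have hx0 : x ∈ Set.Icc (0:ℝ) 1 := ⟨by linarith, by linarith⟩
    have hxh : x + h ∈ Set.Icc (0:ℝ) 1 := ⟨by linarith, by linarith⟩
    have hd : dist x (x+h) < δ := by
      rw [Real.dist_eq]
      rw [show x - (x+h) = -h by ring, abs_neg, abs_of_pos hh]
      exact hhδ
    have := hδ' x hx0 (x+h) hxh hd
    rw [Real.dist_eq] at this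
    simpa using this.le

theorem arbitrary_functions_half (f : ℝ → ℝ)
    (hf_cont : ContinuousOn f (Set.Icc 0 1))
    (hf_nonneg : ∀ x ∈ Set.Icc (0:ℝ) 1, 0 ≤ f x)
    (hf_int : ∫ x in (0:ℝ)..1, f x = 1) :
    Filter.Tendsto (fun n : ℕ =>
        ∑ k ∈ Finset.range n,
          ∫ x in ((2 * (k:ℝ)) / (2 * (n:ℝ)))..((2 * (k:ℝ) + 1) / (2 * (n:ℝ))), f x)
      Filter.atTop (nhds (1 / 2)) := by
  have hUC : UniformContinuousOn f (Set.Icc 0 1) :=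
    isCompact_Icc.uniformContinuousOn_of_continuous hf_cont
  have hInt : ∀ a b : ℝ, a ∈ Set.Icc (0:ℝ) 1 → b ∈ Set.Icc (0:ℝ) 1 →
      IntervalIntegrable f volume a b := by
    intro a b ha hb
    exact (hf_cont.mono (Set.uIcc_subset_Icc ha hb)).intervalIntegrable
  rw [Metric.tendsto_atTop]
  intro ε hε
  obtain ⟨δ, hδpos, hδ'⟩ := Metric.uniformContinuousOn_iff.mp hUC ε hε
  obtain ⟨N, hN⟩ := exists_nat_gt (1/δ)
  refine ⟨max N 1, fun n hn => ?_⟩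
  have hn1 : 1 ≤ n := le_trans (le_max_right _ _) hn
  have hnN : (N:ℝ) ≤ n := Nat.cast_le.mpr (le_trans (le_max_left _ _) hn)
  have npos : (0:ℝ) < n := by
    have : (1:ℝ) ≤ n := by exact_mod_cast hn1
    linarith
  set h : ℝ := 1 / (2*(n:ℝ)) with hh_def
  have hhpos : 0 < h := by rw [hh_def]; positivity
  have hhδ : h < δ := by
    have h1 : (1:ℝ)/δ < n := lt_of_lt_of_le hN hnN
    have h2 : (1:ℝ) < n * δ := (div_lt_iff₀ hδpos).mp h1
    rw [hh_def, div_lt_iff₀ (by positivity)]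
    nlinarith
  have hmem : ∀ r : ℝ, 0 ≤ r → r ≤ 2*(n:ℝ) → r/(2*(n:ℝ)) ∈ Set.Icc (0:ℝ) 1 := by
    intro r h0 h2
    constructor
    · positivity
    · rw [div_le_one (by positivity)]; exact h2
  -- endpoint membership for k < n
  have hmemk : ∀ k : ℕ, k < n → ∀ j : ℝ, 0 ≤ j → j ≤ 2 →
      (2*(k:ℝ) + j)/(2*(n:ℝ)) ∈ Set.Icc (0:ℝ) 1 := by
    intro k hk j hj0 hj2
    apply hmem _ (by positivity)
    have : (k:ℝ) + 1 ≤ n := by exact_mod_cast hk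
    linarith
  -- total integral over the full partition equals 1
  set a : ℕ → ℝ := fun j => (2*(j:ℝ))/(2*(n:ℝ)) with ha_def
  have hamem : ∀ j : ℕ, j ≤ n → a j ∈ Set.Icc (0:ℝ) 1 := by
    intro j hj
    apply hmem _ (by positivity)
    have : (j:ℝ) ≤ n := by exact_mod_cast hj
    linarith
  have htot : ∑ k ∈ Finset.range n, ∫ x in a k..a (k+1), f x = 1 := by
    rw [intervalIntegral.sum_integral_adjacent_intervals]
    · have ha0 : a 0 = 0 := by simp [ha_def]
      have han : a n = 1 := by
        rw [ha_def]
        field_simp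
      rw [ha0, han, hf_int]
    · intro k hk
      exact hInt _ _ (hamem k hk.le) (hamem (k+1) hk)
  -- split each subinterval
  have hsplit : ∀ k : ℕ, k < n →
      (∫ x in a k..a (k+1), f x) =
      (∫ x in ((2*(k:ℝ))/(2*(n:ℝ)))..((2*(k:ℝ)+1)/(2*(n:ℝ))), f x) +
      ∫ x in ((2*(k:ℝ)+1)/(2*(n:ℝ)))..((2*(k:ℝ)+2)/(2*(n:ℝ))), f x := by
    intro k hk
    have hak : a k = (2*(k:ℝ))/(2*(n:ℝ)) := by simp [ha_def]
    have hak1 : a (k+1) = (2*(k:ℝ)+2)/(2*(n:ℝ)) := by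
      simp [ha_def]; push_cast; ring_nf
    rw [hak, hak1]
    exact (intervalIntegral.integral_add_adjacent_intervals
      (hInt _ _ (by simpa using hmemk k hk 0 le_rfl (by norm_num))
        (hmemk k hk 1 (by norm_num) (by norm_num)))
      (hInt _ _ (hmemk k hk 1 (by norm_num) (by norm_num))
        (hmemk k hk 2 (by norm_num) le_rfl))).symm
  have htot2 : ∑ k ∈ Finset.range n,
      ((∫ x in ((2*(k:ℝ))/(2*(n:ℝ)))..((2*(k:ℝ)+1)/(2*(n:ℝ))), f x) +
      ∫ x in ((2*(k:ℝ)+1)/(2*(n:ℝ)))..((2*(k:ℝ)+2)/(2*(n:ℝ))), f x) = 1 := by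
    calc _ = ∑ k ∈ Finset.range n, ∫ x in a k..a (k+1), f x :=
          Finset.sum_congr rfl fun k hk => (hsplit k (Finset.mem_range.mp hk)).symm
      _ = 1 := htot
  -- per-pair bound
  have hpair : ∀ k : ℕ, k < n →
      |(∫ x in ((2*(k:ℝ))/(2*(n:ℝ)))..((2*(k:ℝ)+1)/(2*(n:ℝ))), f x) -
       ∫ x in ((2*(k:ℝ)+1)/(2*(n:ℝ)))..((2*(k:ℝ)+2)/(2*(n:ℝ))), f x| ≤ ε * h := by
    intro k hk
    set c : ℝ := (2*(k:ℝ))/(2*(n:ℝ)) with hc_def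
    have e1 : (2*(k:ℝ)+1)/(2*(n:ℝ)) = c + h := by
      rw [hc_def, hh_def]; field_simp
    have e2 : (2*(k:ℝ)+2)/(2*(n:ℝ)) = c + 2*h := by
      rw [hc_def, hh_def]; field_simp
    have hc0 : 0 ≤ c := by rw [hc_def]; positivity
    have hc2 : c + 2*h ≤ 1 := by
      rw [← e2]
      exact (hmemk k hk 2 (by norm_num) le_rfl).2
    rw [e1, e2]
    exact pair_bound f hf_cont h c hδ' hhpos hhδ hc0 hc2
  -- conclude
  rw [Real.dist_eq]
  have hrewrite : (∑ k ∈ Finset.range n,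
      ∫ x in ((2*(k:ℝ))/(2*(n:ℝ)))..((2*(k:ℝ)+1)/(2*(n:ℝ))), f x) - 1/2 =
      ∑ k ∈ Finset.range n,
        ((∫ x in ((2*(k:ℝ))/(2*(n:ℝ)))..((2*(k:ℝ)+1)/(2*(n:ℝ))), f x) -
         ∫ x in ((2*(k:ℝ)+1)/(2*(n:ℝ)))..((2*(k:ℝ)+2)/(2*(n:ℝ))), f x) / 2 := by
    rw [show (1:ℝ)/2 = (∑ k ∈ Finset.range n,
      ((∫ x in ((2*(k:ℝ))/(2*(n:ℝ)))..((2*(k:ℝ)+1)/(2*(n:ℝ))), f x) +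
      ∫ x in ((2*(k:ℝ)+1)/(2*(n:ℝ)))..((2*(k:ℝ)+2)/(2*(n:ℝ))), f x))/2 by rw [htot2]]
    rw [Finset.sum_div, ← Finset.sum_sub_distrib]
    exact Finset.sum_congr rfl fun k _ => by ring
  rw [hrewrite]
  calc |∑ k ∈ Finset.range n,
        ((∫ x in ((2*(k:ℝ))/(2*(n:ℝ)))..((2*(k:ℝ)+1)/(2*(n:ℝ))), f x) -
         ∫ x in ((2*(k:ℝ)+1)/(2*(n:ℝ)))..((2*(k:ℝ)+2)/(2*(n:ℝ))), f x) / 2|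
      ≤ ∑ k ∈ Finset.range n,
        |((∫ x in ((2*(k:ℝ))/(2*(n:ℝ)))..((2*(k:ℝ)+1)/(2*(n:ℝ))), f x) -
         ∫ x in ((2*(k:ℝ)+1)/(2*(n:ℝ)))..((2*(k:ℝ)+2)/(2*(n:ℝ))), f x) / 2| :=
        Finset.abs_sum_le_sum_abs _ _
    _ ≤ ∑ k ∈ Finset.range n, ε * h / 2 := by
        apply Finset.sum_le_sum
        intro k hk
        have := hpair k (Finset.mem_range.mp hk)
        rw [abs_div, abs_of_pos (by norm_num : (0:ℝ) < 2)]
        linarith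
    _ = n * (ε * h / 2) := by rw [Finset.sum_const, Finset.card_range, nsmul_eq_mul]
    _ = ε / 4 := by
        rw [hh_def]; field_simp; ring
    _ < ε := by linarith
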